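/- Let G and H be Lie groups, t : H → G a smooth group homomorphism, and α : G × H → H a smooth action of G on H by group automorphisms, such that (G,H,t,α) is a crossed module. Let M be a second-countable smooth manifold and let (g,a) be a Γ-cocycle with respect to an open cover {U_i}_{i∈I} of M whose components g_{ij} and a_{ijk} are smooth maps. Then there is a countable subcover such that the restricted Γ-cocycle is equivalent, via smooth equivalence data (h_i, e_{ij}), to a normalized smooth Γ-cocycle (g',a') (i.e. one with g'_{ii} = 1 and a'_{iij} = a'_{ijj} = a'_{iji} = 1 for all i, j). (Remark 2.1 of the paper: every Γ-cocycle is equivalent to a normalized Γ-cocycle.) -/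

import Mathlib

/-- A crossed module of groups. -/
structure CrossedModule (G H : Type*) [Group G] [Group H] where
  t : H → G
  α : G → H → H
  t_mul : ∀ h₁ h₂ : H, t (h₁ * h₂) = t h₁ * t h₂
  α_one : ∀ h : H, α 1 h = h
  α_mul : ∀ (g₁ g₂ : G) (h : H), α (g₁ * g₂) h = α g₁ (α g₂ h)
  α_hom : ∀ (g : G) (h₁ h₂ : H), α g (h₁ * h₂) = α g h₁ * α g h₂
  peiffer : ∀ h x : H, α (t h) x = h * x * h⁻¹
  equivariance : ∀ (g : G) (h : H), t (α g h) = g * t h * g⁻¹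

/-- A `Γ`-cocycle with respect to a family of subsets `U : I → Set X`, for the
Lie 2-group `Γ` associated to a crossed module `(G,H,t,α)`. -/
structure GammaCocycle {G H : Type*} [Group G] [Group H] (cm : CrossedModule G H)
    {X I : Type*} (U : I → Set X) where
  g : I → I → X → G
  a : I → I → I → X → H
  cocycle_g : ∀ (i j k : I) (x : X), x ∈ U i → x ∈ U j → x ∈ U k →
    g i k x = cm.t (a i j k x) * g j k x * g i j x
  cocycle_a : ∀ (i j k l : I) (x : X), x ∈ U i → x ∈ U j → x ∈ U k → x ∈ U l →
    a i k l x * cm.α (g k l x) (a i j k x) = a i j l x * a j k l x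

namespace CrossedModule
variable {G H : Type*} [Group G] [Group H] (cm : CrossedModule G H)

theorem t_one : cm.t 1 = 1 := by
  have := cm.t_mul 1 1; rw [one_mul] at this; exact right_eq_mul.mp this

theorem t_inv (h : H) : cm.t h⁻¹ = (cm.t h)⁻¹ := by
  have := cm.t_mul h⁻¹ h
  rw [inv_mul_cancel, cm.t_one] at this
  exact eq_inv_of_mul_eq_one_left this.symm

theorem α_one' (g : G) : cm.α g 1 = 1 := by
  have := cm.α_hom g 1 1; rw [one_mul] at this; exact right_eq_mul.mp this

theorem α_inv (g : G) (x : H) : cm.α g x⁻¹ = (cm.α g x)⁻¹ := by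
  have := cm.α_hom g x⁻¹ x
  rw [inv_mul_cancel, cm.α_one'] at this
  exact eq_inv_of_mul_eq_one_left this.symm

theorem α_t_mul (h : H) (w : G) (x : H) :
    cm.α (cm.t h * w) x = h * cm.α w x * h⁻¹ := by
  rw [cm.α_mul, cm.peiffer]

theorem twist_g_core (gij gjk gik : G) (aijk : H) (eij ejk eik : H)
    (hcg : gik = cm.t aijk * gjk * gij) :
    cm.t (eik * aijk * ejk⁻¹ * (cm.α (cm.t ejk * gjk) eij)⁻¹) *
      (cm.t ejk * gjk) * (cm.t eij * gij) = cm.t eik * gik := by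
  rw [hcg]
  simp only [cm.t_mul, cm.t_inv, cm.equivariance]
  group

theorem twist_a_core (gjk gkl gjl : G) (aijk aikl aijl ajkl : H)
    (eij ejk ekl eik ejl eil : H)
    (hcg : gjl = cm.t ajkl * gkl * gjk)
    (hca : aikl * cm.α gkl aijk = aijl * ajkl) :
    (eil * aikl * ekl⁻¹ * (cm.α (cm.t ekl * gkl) eik)⁻¹) *
      cm.α (cm.t ekl * gkl)
        (eik * aijk * ejk⁻¹ * (cm.α (cm.t ejk * gjk) eij)⁻¹) =
    (eil * aijl * ejl⁻¹ * (cm.α (cm.t ejl * gjl) eij)⁻¹) *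
      (ejl * ajkl * ekl⁻¹ * (cm.α (cm.t ekl * gkl) ejk)⁻¹) := by
  have hX : cm.α gkl aijk = aikl⁻¹ * (aijl * ajkl) := by rw [← hca]; group
  rw [hcg]
  simp only [cm.α_t_mul, cm.α_hom, cm.α_inv, cm.α_mul, mul_assoc, hX]
  group

end CrossedModule

namespace GammaCocycle
variable {G H : Type*} [Group G] [Group H] {cm : CrossedModule G H}
variable {X I : Type*} {U : I → Set X}

/-- Twist a `Γ`-cocycle by equivalence data `(1, e)`. -/
def twist (c : GammaCocycle cm U) (e : I → I → X → H) : GammaCocycle cm U where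
  g i j x := cm.t (e i j x) * c.g i j x
  a i j k x := e i k x * c.a i j k x * (e j k x)⁻¹ *
      (cm.α (cm.t (e j k x) * c.g j k x) (e i j x))⁻¹
  cocycle_g i j k x hi hj hk :=
    (cm.twist_g_core _ _ _ _ _ _ _ (c.cocycle_g i j k x hi hj hk)).symm
  cocycle_a i j k l x hi hj hk hl :=
    cm.twist_a_core _ _ _ _ _ _ _ _ _ _ _ _ _
      (c.cocycle_g j k l x hj hk hl) (c.cocycle_a i j k l x hi hj hk hl)

theorem twist_g_apply (c : GammaCocycle cm U) (e : I → I → X → H) (i j : I) (x : X) :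
    (c.twist e).g i j x = cm.t (e i j x) * c.g i j x := by rfl

theorem twist_a_apply (c : GammaCocycle cm U) (e : I → I → X → H) (i j k : I) (x : X) :
    (c.twist e).a i j k x = e i k x * c.a i j k x * (e j k x)⁻¹ *
      (cm.α ((c.twist e).g j k x) (e i j x))⁻¹ := by rfl

/-- The twisted cocycle absorbs the twisting data. -/
theorem twist_absorb (c : GammaCocycle cm U) (e : I → I → X → H) (i j k : I) (x : X)
    (y z : H) :
    (c.twist e).a i j k x * cm.α ((c.twist e).g j k x) (e i j x * y) * (e j k x * z) =
      e i k x * (c.a i j k x * cm.α (c.g j k x) y * z) := by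
  simp only [twist_a_apply, twist_g_apply, cm.α_hom, cm.α_t_mul]
  group

theorem twist_equiv (c : GammaCocycle cm U) (e : I → I → X → H) (i j k : I) (x : X) :
    (c.twist e).a i j k x * cm.α ((c.twist e).g j k x) (e i j x) * e j k x =
      e i k x * c.a i j k x := by
  have := twist_absorb c e i j k x 1 1
  simpa only [mul_one, cm.α_one'] using this

end GammaCocycle

namespace GammaCocycle
variable {G H : Type*} [Group G] [Group H] {cm : CrossedModule G H}
variable {X I : Type*} {U : I → Set X}

/-- The first normalization step: twist by `e i j = a i j j`. -/
def nrm₁ (c : GammaCocycle cm U) : GammaCocycle cm U :=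
  c.twist (fun i j x => c.a i j j x)

theorem fact_tg (c : GammaCocycle cm U) (j : I) (x : X) (hj : x ∈ U j) :
    cm.t (c.a j j j x) * c.g j j x = 1 := by
  have h := c.cocycle_g j j j x hj hj hj
  have h2 : c.g j j x * (c.g j j x)⁻¹ =
      (cm.t (c.a j j j x) * c.g j j x * c.g j j x) * (c.g j j x)⁻¹ := by rw [← h]
  rw [mul_inv_cancel] at h2
  rw [mul_assoc, mul_inv_cancel, mul_one] at h2
  exact h2.symm

theorem fact_ajj (c : GammaCocycle cm U) (i j : I) (x : X) (hi : x ∈ U i) (hj : x ∈ U j) :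
    c.a i j j x = c.a j j j x := by
  have h := c.cocycle_a i j j j x hi hj hj hj
  have h1 : cm.α (c.g j j x) (c.a i j j x) = c.a j j j x := mul_left_cancel h
  have hg : c.g j j x = cm.t ((c.a j j j x)⁻¹) := by
    rw [cm.t_inv]
    exact eq_inv_of_mul_eq_one_right (c.fact_tg j x hj)
  rw [hg, cm.peiffer] at h1
  have h2 : (c.a j j j x) * ((c.a j j j x)⁻¹ * c.a i j j x * (c.a j j j x)⁻¹⁻¹) *
      (c.a j j j x)⁻¹⁻¹⁻¹ = c.a i j j x := by group
  rw [h1] at h2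
  rw [← h2]; group

theorem nrm₁_g_diag (c : GammaCocycle cm U) (i : I) (x : X) (hi : x ∈ U i) :
    (c.nrm₁).g i i x = 1 := by
  rw [nrm₁, twist_g_apply]
  exact c.fact_tg i x hi

theorem fact_alpha (c : GammaCocycle cm U) (i j : I) (x : X) (hi : x ∈ U i) (hj : x ∈ U j) :
    cm.α (c.g i j x) (c.a i i i x) = c.a i i j x := by
  have h := c.cocycle_a i i i j x hi hi hi hj
  exact mul_left_cancel h

theorem nrm₁_a_iij (c : GammaCocycle cm U) (i j : I) (x : X) (hi : x ∈ U i) (hj : x ∈ U j) :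
    (c.nrm₁).a i i j x = 1 := by
  simp only [nrm₁, twist_a_apply, twist_g_apply, cm.α_t_mul]
  rw [c.fact_alpha i j x hi hj]
  group

theorem nrm₁_a_ijj (c : GammaCocycle cm U) (i j : I) (x : X) (hi : x ∈ U i) (hj : x ∈ U j) :
    (c.nrm₁).a i j j x = 1 := by
  have hd := c.nrm₁_g_diag j x hj
  rw [nrm₁] at hd
  simp only [nrm₁, twist_a_apply]
  rw [hd, cm.α_one, c.fact_ajj i j x hi hj]
  group

theorem nrm₁_a_iji (c : GammaCocycle cm U) (i j : I) (x : X) (hi : x ∈ U i) (hj : x ∈ U j) :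
    cm.α ((c.nrm₁).g j i x) ((c.nrm₁).a j i j x) = (c.nrm₁).a i j i x := by
  have h := (c.nrm₁).cocycle_a j i j i x hj hi hj hi
  rw [c.nrm₁_a_iij j i x hj hi, c.nrm₁_a_ijj j i x hj hi, one_mul, one_mul] at h
  exact h

end GammaCocycle

namespace GammaCocycle
variable {G H : Type*} [Group G] [Group H] {cm : CrossedModule G H}
variable {X I : Type*} {U : I → Set X}
variable (r : I → I → Prop) [DecidableRel r]

/-- The twisting data of the second normalization step. -/
def nrmF (c : GammaCocycle cm U) : I → I → X → H :=
  fun i j x => if r i j then (c.nrm₁).a j i j x else 1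

/-- The second normalization step. -/
def nrm₂ (c : GammaCocycle cm U) : GammaCocycle cm U :=
  (c.nrm₁).twist (nrmF r c)

theorem nrm₂_g_diag (c : GammaCocycle cm U) (i : I) (x : X)
    (hirr : ¬ r i i) (hi : x ∈ U i) : (c.nrm₂ r).g i i x = 1 := by
  have hd := c.nrm₁_g_diag i x hi
  simp only [nrm₂, nrmF, twist_g_apply, if_neg hirr, cm.t_one, one_mul]
  exact hd

theorem nrm₂_a_iij (c : GammaCocycle cm U) (i j : I) (x : X)
    (hirr : ¬ r i i) (hi : x ∈ U i) (hj : x ∈ U j) : (c.nrm₂ r).a i i j x = 1 := by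
  simp only [nrm₂, nrmF, twist_a_apply, twist_g_apply, if_neg hirr]
  rw [c.nrm₁_a_iij i j x hi hj, cm.α_one']
  group

theorem nrm₂_a_ijj (c : GammaCocycle cm U) (i j : I) (x : X)
    (hirrj : ¬ r j j) (hi : x ∈ U i) (hj : x ∈ U j) : (c.nrm₂ r).a i j j x = 1 := by
  have hd := nrm₂_g_diag r c j x hirrj hj
  simp only [nrm₂] at hd
  simp only [nrm₂, twist_a_apply, hd, cm.α_one, nrmF, if_neg hirrj]
  rw [c.nrm₁_a_ijj i j x hi hj]
  group

theorem nrm₂_a_iji (c : GammaCocycle cm U) (i j : I) (x : X)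
    (hirr : ∀ k, ¬ r k k) (hasym : ∀ a b, r a b → ¬ r b a)
    (htri : ∀ a b, a ≠ b → r a b ∨ r b a)
    (hi : x ∈ U i) (hj : x ∈ U j) : (c.nrm₂ r).a i j i x = 1 := by
  by_cases hij : i = j
  · subst hij
    exact nrm₂_a_iij r c i i x (hirr i) hi hi
  rcases htri i j hij with h | h
  · have hji : ¬ r j i := hasym _ _ h
    simp only [nrm₂, nrmF, twist_a_apply, twist_g_apply, if_pos h, if_neg hji,
      if_neg (hirr i), cm.t_one, one_mul]
    rw [c.nrm₁_a_iji i j x hi hj]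
    group
  · have hij' : ¬ r i j := hasym _ _ h
    simp only [nrm₂, nrmF, twist_a_apply, twist_g_apply, if_pos h, if_neg hij',
      if_neg (hirr i), cm.α_one']
    group

end GammaCocycle

open GammaCocycle


/-- Every smooth `Γ`-cocycle on a second-countable smooth manifold is, after passing
to a countable subcover, equivalent via smooth equivalence data to a normalized
smooth `Γ`-cocycle. -/
theorem smooth_cocycle_normalization
    {EG HG : Type*} [NormedAddCommGroup EG] [NormedSpace ℝ EG] [TopologicalSpace HG]
    (IG : ModelWithCorners ℝ EG HG)
    {EH HH : Type*} [NormedAddCommGroup EH] [NormedSpace ℝ EH] [TopologicalSpace HH]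
    (IH : ModelWithCorners ℝ EH HH)
    {G : Type*} [Group G] [TopologicalSpace G] [ChartedSpace HG G] [LieGroup IG (⊤ : ℕ∞) G]
    {H : Type*} [Group H] [TopologicalSpace H] [ChartedSpace HH H] [LieGroup IH (⊤ : ℕ∞) H]
    (cm : CrossedModule G H)
    (ht_smooth : ContMDiff IH IG (⊤ : ℕ∞) cm.t)
    (hα_smooth : ContMDiff (IG.prod IH) IH (⊤ : ℕ∞) (fun p : G × H => cm.α p.1 p.2))
    {EM HM : Type*} [NormedAddCommGroup EM] [NormedSpace ℝ EM] [TopologicalSpace HM]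
    (IM : ModelWithCorners ℝ EM HM)
    {M : Type*} [TopologicalSpace M] [ChartedSpace HM M] [IsManifold IM (⊤ : ℕ∞) M]
    [SecondCountableTopology M]
    {I : Type*} (U : I → Set M) (hUopen : ∀ i : I, IsOpen (U i))
    (hUcover : ∀ x : M, ∃ i : I, x ∈ U i)
    (c : GammaCocycle cm U)
    (hg_smooth : ∀ i j : I, ContMDiffOn IM IG (⊤ : ℕ∞) (c.g i j) (U i ∩ U j))
    (ha_smooth : ∀ i j k : I, ContMDiffOn IM IH (⊤ : ℕ∞) (c.a i j k) (U i ∩ U j ∩ U k)) :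
    ∃ J : Set I, J.Countable ∧ (∀ x : M, ∃ i ∈ J, x ∈ U i) ∧
      ∃ (h : I → M → G) (e : I → I → M → H)
        (g' : I → I → M → G) (a' : I → I → I → M → H),
        -- the equivalence data are smooth
        (∀ i ∈ J, ContMDiffOn IM IG (⊤ : ℕ∞) (h i) (U i)) ∧
        (∀ i ∈ J, ∀ j ∈ J, ContMDiffOn IM IH (⊤ : ℕ∞) (e i j) (U i ∩ U j)) ∧
        -- the new cocycle is smooth
        (∀ i ∈ J, ∀ j ∈ J, ContMDiffOn IM IG (⊤ : ℕ∞) (g' i j) (U i ∩ U j)) ∧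
        (∀ i ∈ J, ∀ j ∈ J, ∀ k ∈ J,
          ContMDiffOn IM IH (⊤ : ℕ∞) (a' i j k) (U i ∩ U j ∩ U k)) ∧
        -- `(g',a')` is a `Γ`-cocycle on the subcover
        (∀ i ∈ J, ∀ j ∈ J, ∀ k ∈ J, ∀ x : M, x ∈ U i → x ∈ U j → x ∈ U k →
          g' i k x = cm.t (a' i j k x) * g' j k x * g' i j x) ∧
        (∀ i ∈ J, ∀ j ∈ J, ∀ k ∈ J, ∀ l ∈ J, ∀ x : M,
          x ∈ U i → x ∈ U j → x ∈ U k → x ∈ U l →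
          a' i k l x * cm.α (g' k l x) (a' i j k x) = a' i j l x * a' j k l x) ∧
        -- `(h,e)` is an equivalence from the restricted `(g,a)` to `(g',a')`
        (∀ i ∈ J, ∀ j ∈ J, ∀ x : M, x ∈ U i → x ∈ U j →
          g' i j x * h i x = cm.t (e i j x) * h j x * c.g i j x) ∧
        (∀ i ∈ J, ∀ j ∈ J, ∀ k ∈ J, ∀ x : M, x ∈ U i → x ∈ U j → x ∈ U k →
          a' i j k x * cm.α (g' j k x) (e i j x) * e j k x =
            e i k x * cm.α (h k x) (c.a i j k x)) ∧
        -- `(g',a')` is normalized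
        (∀ i ∈ J, ∀ x : M, x ∈ U i → g' i i x = 1) ∧
        (∀ i ∈ J, ∀ j ∈ J, ∀ x : M, x ∈ U i → x ∈ U j →
          a' i i j x = 1 ∧ a' i j j x = 1 ∧ a' i j i x = 1) := by
  classical
  obtain ⟨J, hJc, hJeq⟩ := TopologicalSpace.isOpen_iUnion_countable U hUopen
  set r : I → I → Prop := WellOrderingRel with hr
  have hirr : ∀ k : I, ¬ r k k := fun k => irrefl_of WellOrderingRel k
  have hasym : ∀ a b : I, r a b → ¬ r b a := fun a b => asymm_of WellOrderingRel
  have htri : ∀ a b : I, a ≠ b → r a b ∨ r b a := by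
    intro a b hab
    rcases trichotomous_of WellOrderingRel a b with h1 | h1 | h1
    · exact Or.inl h1
    · exact absurd h1 hab
    · exact Or.inr h1
  -- smoothness helpers
  have smα : ∀ {s : Set M} {F : M → G} {K : M → H}, ContMDiffOn IM IG (⊤ : ℕ∞) F s →
      ContMDiffOn IM IH (⊤ : ℕ∞) K s → ContMDiffOn IM IH (⊤ : ℕ∞) (fun x => cm.α (F x) (K x)) s :=
    fun hF hK => hα_smooth.comp_contMDiffOn (hF.prodMk hK)
  have smt : ∀ {s : Set M} {K : M → H}, ContMDiffOn IM IH (⊤ : ℕ∞) K s →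
      ContMDiffOn IM IG (⊤ : ℕ∞) (fun x => cm.t (K x)) s :=
    fun hK => ht_smooth.comp_contMDiffOn hK
  have sm_e0 : ∀ i j : I, ContMDiffOn IM IH (⊤ : ℕ∞) (fun x => c.a i j j x) (U i ∩ U j) :=
    fun i j => (ha_smooth i j j).mono (fun x hx => ⟨hx, hx.2⟩)
  have sm_g1 : ∀ i j : I, ContMDiffOn IM IG (⊤ : ℕ∞) (fun x => (c.nrm₁).g i j x) (U i ∩ U j) := by
    intro i j
    simp only [nrm₁, twist_g_apply]
    exact (smt (sm_e0 i j)).mul (hg_smooth i j)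
  have sm_a1 : ∀ i j k : I,
      ContMDiffOn IM IH (⊤ : ℕ∞) (fun x => (c.nrm₁).a i j k x) (U i ∩ U j ∩ U k) := by
    intro i j k
    simp only [nrm₁, twist_a_apply, twist_g_apply]
    have t1 : U i ∩ U j ∩ U k ⊆ U i ∩ U k := fun x hx => ⟨hx.1.1, hx.2⟩
    have t2 : U i ∩ U j ∩ U k ⊆ U j ∩ U k := fun x hx => ⟨hx.1.2, hx.2⟩
    have t3 : U i ∩ U j ∩ U k ⊆ U i ∩ U j := fun x hx => hx.1
    exact ((((sm_e0 i k).mono t1).mul (ha_smooth i j k)).mul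
        (((sm_e0 j k).mono t2).inv)).mul
      ((smα ((sm_g1 j k).mono t2) ((sm_e0 i j).mono t3)).inv)
  have sm_f : ∀ i j : I, ContMDiffOn IM IH (⊤ : ℕ∞) (fun x => nrmF r c i j x) (U i ∩ U j) := by
    intro i j
    by_cases hrij : r i j
    · simp only [nrmF, if_pos hrij]
      exact (sm_a1 j i j).mono (fun x hx => ⟨⟨hx.2, hx.1⟩, hx.2⟩)
    · simp only [nrmF, if_neg hrij]
      exact contMDiffOn_const
  have sm_g2 : ∀ i j : I, ContMDiffOn IM IG (⊤ : ℕ∞) (fun x => (c.nrm₂ r).g i j x) (U i ∩ U j) := by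
    intro i j
    simp only [nrm₂, twist_g_apply]
    exact (smt (sm_f i j)).mul (sm_g1 i j)
  have sm_a2 : ∀ i j k : I,
      ContMDiffOn IM IH (⊤ : ℕ∞) (fun x => (c.nrm₂ r).a i j k x) (U i ∩ U j ∩ U k) := by
    intro i j k
    simp only [nrm₂, twist_a_apply, twist_g_apply]
    have t1 : U i ∩ U j ∩ U k ⊆ U i ∩ U k := fun x hx => ⟨hx.1.1, hx.2⟩
    have t2 : U i ∩ U j ∩ U k ⊆ U j ∩ U k := fun x hx => ⟨hx.1.2, hx.2⟩
    have t3 : U i ∩ U j ∩ U k ⊆ U i ∩ U j := fun x hx => hx.1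
    exact ((((sm_f i k).mono t1).mul (sm_a1 i j k)).mul (((sm_f j k).mono t2).inv)).mul
      ((smα ((smt ((sm_f j k).mono t2)).mul ((sm_g1 j k).mono t2))
        ((sm_f i j).mono t3)).inv)
  refine ⟨J, hJc, ?_, fun _ _ => (1 : G),
    fun i j x => nrmF r c i j x * c.a i j j x,
    (c.nrm₂ r).g, (c.nrm₂ r).a, ?_, ?_, ?_, ?_, ?_, ?_, ?_, ?_, ?_, ?_⟩
  · intro x
    obtain ⟨i, hx⟩ := hUcover x
    have hx2 : x ∈ ⋃ i, U i := Set.mem_iUnion.2 ⟨i, hx⟩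
    rw [← hJeq] at hx2
    simpa using Set.mem_iUnion₂.mp hx2
  · intro i _
    exact contMDiffOn_const
  · intro i _ j _
    exact (sm_f i j).mul (sm_e0 i j)
  · intro i _ j _
    exact sm_g2 i j
  · intro i _ j _ k _
    exact sm_a2 i j k
  · intro i _ j _ k _ x hi hj hk
    exact (c.nrm₂ r).cocycle_g i j k x hi hj hk
  · intro i _ j _ k _ l _ x hi hj hk hl
    exact (c.nrm₂ r).cocycle_a i j k l x hi hj hk hl
  · intro i _ j _ x _ _
    simp only [nrm₂, nrm₁, twist_g_apply, cm.t_mul, mul_one, one_mul, mul_assoc]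
  · intro i _ j _ k _ x _ _ _
    have h1 := twist_absorb (c.nrm₁) (nrmF r c) i j k x (c.a i j j x) (c.a j k k x)
    have h2 := twist_equiv c (fun i j x => c.a i j j x) i j k x
    rw [show ((c.nrm₁).twist (nrmF r c)) = c.nrm₂ r from rfl] at h1
    rw [show (c.nrm₁) = c.twist (fun i j x => c.a i j j x) from rfl] at h1
    rw [cm.α_one]
    rw [h1, h2, ← mul_assoc]
  · intro i _ x hi
    exact nrm₂_g_diag r c i x (hirr i) hi
  · intro i _ j _ x hi hj
    exact ⟨nrm₂_a_iij r c i j x (hirr i) hi hj, nrm₂_a_ijj r c i j x (hirr j) hi hj,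
      nrm₂_a_iji r c i j x hirr hasym htri hi hj⟩
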